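/- Under the setup of the decremental SVD step, the matrix χ́ obtained by deleting the first column of χ satisfies χ́ = (U U_ś) Σ_ś (V₂ V_ś)*, where χ = U Σ V* is an SVD, Ś = Σ − U* x₁ z₁ᵀ V has SVD U_ś Σ_ś V_ś*, and V₂ is V with its first row removed. -/

import Mathlib

open Matrix

/-- Remove the first column of a matrix. -/
def dropFirstCol {n w : ℕ} (M : Matrix (Fin n) (Fin (w + 1)) ℂ) :
    Matrix (Fin n) (Fin w) ℂ :=
  Matrix.of fun i j => M i j.succ

/-- Remove the first row of a matrix. -/
def dropFirstRow {w n : ℕ} (M : Matrix (Fin (w + 1)) (Fin n) ℂ) :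
    Matrix (Fin w) (Fin n) ℂ :=
  Matrix.of fun i j => M i.succ j

/-- Decremental SVD (Proposition 2): if `χ = U Sg Vᴴ` is an SVD, `Ś = Sg − Uᴴ x₁ z₁ᵀ V`
has SVD `U_ś Sg_ś V_śᴴ`, and `V₂` is `V` with its first row removed, then the matrix `χ́`
obtained by deleting the first column of `χ` satisfies `χ́ = (U U_ś) Sg_ś (V₂ V_ś)ᴴ`. -/
theorem stmt8 (n w q : ℕ) (hq : q = min n (w + 1))
    (χ : Matrix (Fin n) (Fin (w + 1)) ℂ)
    (U : Matrix (Fin n) (Fin q) ℂ) (Sg : Matrix (Fin q) (Fin (w + 1)) ℂ)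
    (V : Matrix (Fin (w + 1)) (Fin (w + 1)) ℂ)
    (hU : Uᴴ * U = 1) (hV : Vᴴ * V = 1) (hV' : V * Vᴴ = 1)
    (hχ : χ = U * Sg * Vᴴ)
    (Uds Sgds : Matrix (Fin q) (Fin q) ℂ) (Vds : Matrix (Fin (w + 1)) (Fin q) ℂ)
    (hUds : Udsᴴ * Uds = 1) (hVds : Vdsᴴ * Vds = 1)
    (hSd : Sg - Uᴴ * vecMulVec (fun i => χ i 0)
        (fun j : Fin (w + 1) => if j = 0 then (1 : ℂ) else 0) * V = Uds * Sgds * Vdsᴴ) :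
    dropFirstCol χ = (U * Uds) * Sgds * (dropFirstRow V * Vds)ᴴ := by
  set x₁ : Fin n → ℂ := fun i => χ i 0 with hx
  set z : Fin (w + 1) → ℂ := fun j => if j = 0 then (1 : ℂ) else 0 with hz
  set A : Matrix (Fin n) (Fin (w + 1)) ℂ := vecMulVec x₁ z with hAdef
  -- A factors through U
  have hA : A = U * vecMulVec (fun k => (Sg * Vᴴ) k 0) z := by
    ext i j
    simp only [hAdef, vecMulVec_apply, mul_apply, hx, hχ, Matrix.mul_assoc]
    rw [Finset.sum_mul]
    exact Finset.sum_congr rfl fun k _ => by ring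
  have hUUA : U * Uᴴ * A = A := by
    rw [hA, ← Matrix.mul_assoc, Matrix.mul_assoc U Uᴴ U, hU, Matrix.mul_one]
  -- key identity
  have key : U * (Uds * Sgds * Vdsᴴ) * Vᴴ = χ - A := by
    rw [← hSd, Matrix.mul_sub, Matrix.sub_mul, ← hχ]
    congr 1
    calc U * (Uᴴ * A * V) * Vᴴ
        = U * Uᴴ * A * (V * Vᴴ) := by
          simp only [Matrix.mul_assoc]
      _ = A := by rw [hV', Matrix.mul_one, hUUA]
  ext i j
  show χ i j.succ = _
  have hsplit : (U * Uds) * Sgds * (dropFirstRow V * Vds)ᴴ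
      = (U * (Uds * Sgds * Vdsᴴ)) * (dropFirstRow V)ᴴ := by
    rw [conjTranspose_mul]
    simp only [Matrix.mul_assoc]
  rw [hsplit]
  have : ((U * (Uds * Sgds * Vdsᴴ)) * (dropFirstRow V)ᴴ) i j
      = (U * (Uds * Sgds * Vdsᴴ) * Vᴴ) i j.succ := by
    simp only [mul_apply, conjTranspose_apply, dropFirstRow, Matrix.of_apply]
  rw [this, key]
  simp [hAdef, vecMulVec_apply, hz, Fin.succ_ne_zero, Matrix.sub_apply]
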